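/- Let x_s, x_d, y_s, y_d : Fin n → ℍ be quaternion vectors with x_s ≠ 0 and x_s + y_s ≠ 0. Writing ⟨u, v⟩ = ∑ᵢ re(star(uᵢ)·vᵢ) for the real inner product and ‖·‖₂ for the Euclidean norm ‖u‖₂ = sqrt(∑ᵢ ‖uᵢ‖²), one has |⟨x_s + y_s, x_d + y_d⟩ / ‖x_s + y_s‖₂ − ⟨x_s, x_d⟩ / ‖x_s‖₂| ≤ ‖y_d‖₂ + 2·‖x_d‖₂·‖y_s‖₂ / ‖x_s + y_s‖₂. (This is the bound on the dual part of ‖x̂ + ŷ‖₂ − ‖x̂‖₂ for dual quaternion vectors x̂ = x_s + x_d·ε and ŷ = y_s + y_d·ε.) -/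

import Mathlib

local notation "ℍ" => Quaternion ℝ

/-- The Euclidean 2-norm of a quaternion vector. -/
noncomputable def qnorm {n : ℕ} (u : Fin n → ℍ) : ℝ := Real.sqrt (∑ i, ‖u i‖ ^ 2)

/-- The real inner product of two quaternion vectors: `∑ i, re (uᵢ* · vᵢ)`. -/
noncomputable def qinner {n : ℕ} (u v : Fin n → ℍ) : ℝ := ∑ i, (star (u i) * v i).re

section aux

open scoped RealInnerProductSpace

lemma aux_bound {E : Type*} [NormedAddCommGroup E] [InnerProductSpace ℝ E]
    (xs xd ys yd : E) (hx : xs ≠ 0) (hxy : xs + ys ≠ 0) :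
    |⟪xs + ys, xd + yd⟫ / ‖xs + ys‖ - ⟪xs, xd⟫ / ‖xs‖| ≤
      ‖yd‖ + 2 * ‖xd‖ * ‖ys‖ / ‖xs + ys‖ := by
  set S := xs + ys with hS
  have ha : (0:ℝ) < ‖xs‖ := norm_pos_iff.mpr hx
  have hs : (0:ℝ) < ‖S‖ := norm_pos_iff.mpr hxy
  have h1 : ⟪S, xd + yd⟫ / ‖S‖ - ⟪xs, xd⟫ / ‖xs‖
      = ⟪S, yd⟫ / ‖S‖ + (⟪S, xd⟫ / ‖S‖ - ⟪xs, xd⟫ / ‖xs‖) := by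
    rw [inner_add_right]; ring
  rw [h1]
  have cs1 : |⟪S, yd⟫ / ‖S‖| ≤ ‖yd‖ := by
    rw [abs_div, abs_of_pos hs, div_le_iff₀ hs]
    calc |⟪S, yd⟫| ≤ ‖S‖ * ‖yd‖ := abs_real_inner_le_norm S yd
      _ = ‖yd‖ * ‖S‖ := by ring
  have key : ⟪S, xd⟫ / ‖S‖ - ⟪xs, xd⟫ / ‖xs‖
      = (‖xs‖ * ⟪ys, xd⟫ + (‖xs‖ - ‖S‖) * ⟪xs, xd⟫) / (‖S‖ * ‖xs‖) := by
    have : ⟪S, xd⟫ = ⟪xs, xd⟫ + ⟪ys, xd⟫ := by rw [hS, inner_add_left]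
    rw [this]
    field_simp
    ring
  have hns : |‖xs‖ - ‖S‖| ≤ ‖ys‖ := by
    have := abs_norm_sub_norm_le xs S
    have h2 : xs - S = -ys := by rw [hS]; abel
    rwa [h2, norm_neg] at this
  have cs2 : |⟪S, xd⟫ / ‖S‖ - ⟪xs, xd⟫ / ‖xs‖| ≤ 2 * ‖xd‖ * ‖ys‖ / ‖S‖ := by
    rw [key, abs_div, abs_of_pos (mul_pos hs ha)]
    have hnum : |‖xs‖ * ⟪ys, xd⟫ + (‖xs‖ - ‖S‖) * ⟪xs, xd⟫|
        ≤ ‖xs‖ * (‖ys‖ * ‖xd‖) + ‖ys‖ * (‖xs‖ * ‖xd‖) := by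
      calc |‖xs‖ * ⟪ys, xd⟫ + (‖xs‖ - ‖S‖) * ⟪xs, xd⟫|
          ≤ |‖xs‖ * ⟪ys, xd⟫| + |(‖xs‖ - ‖S‖) * ⟪xs, xd⟫| := abs_add_le _ _
        _ = ‖xs‖ * |⟪ys, xd⟫| + |‖xs‖ - ‖S‖| * |⟪xs, xd⟫| := by
            rw [abs_mul, abs_mul, abs_of_pos ha]
        _ ≤ ‖xs‖ * (‖ys‖ * ‖xd‖) + ‖ys‖ * (‖xs‖ * ‖xd‖) := by
            gcongr
            · exact abs_real_inner_le_norm ys xd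
            · exact abs_real_inner_le_norm xs xd
    calc |‖xs‖ * ⟪ys, xd⟫ + (‖xs‖ - ‖S‖) * ⟪xs, xd⟫| / (‖S‖ * ‖xs‖)
        ≤ (‖xs‖ * (‖ys‖ * ‖xd‖) + ‖ys‖ * (‖xs‖ * ‖xd‖)) / (‖S‖ * ‖xs‖) := by
          gcongr
      _ = 2 * ‖xd‖ * ‖ys‖ / ‖S‖ := by field_simp; ring
  calc |⟪S, yd⟫ / ‖S‖ + (⟪S, xd⟫ / ‖S‖ - ⟪xs, xd⟫ / ‖xs‖)|
      ≤ |⟪S, yd⟫ / ‖S‖| + |⟪S, xd⟫ / ‖S‖ - ⟪xs, xd⟫ / ‖xs‖| := abs_add_le _ _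
    _ ≤ ‖yd‖ + 2 * ‖xd‖ * ‖ys‖ / ‖S‖ := add_le_add cs1 cs2

lemma qnorm_eq {n : ℕ} (u : Fin n → ℍ) :
    qnorm u = ‖(WithLp.equiv 2 (Fin n → ℍ)).symm u‖ := by
  rw [qnorm, PiLp.norm_eq_sum (by norm_num : (0:ℝ) < ENNReal.toReal 2)]
  simp only [ENNReal.toReal_ofNat, WithLp.equiv_symm_apply, PiLp.toLp_apply]
  rw [Real.sqrt_eq_rpow]
  congr 1
  · refine Finset.sum_congr rfl fun i _ => ?_
    rw [Real.rpow_two]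

lemma qinner_eq {n : ℕ} (u v : Fin n → ℍ) :
    qinner u v = (inner ℝ ((WithLp.equiv 2 (Fin n → ℍ)).symm u)
      ((WithLp.equiv 2 (Fin n → ℍ)).symm v) : ℝ) := by
  rw [qinner, PiLp.inner_apply]
  refine Finset.sum_congr rfl fun i _ => ?_
  rw [real_inner_comm, Quaternion.inner_def]
  simp [Quaternion.re_mul, mul_comm]

end aux

theorem stmt9 {n : ℕ} (xs xd ys yd : Fin n → ℍ) (hx : xs ≠ 0) (hxy : xs + ys ≠ 0) :
    |qinner (xs + ys) (xd + yd) / qnorm (xs + ys) - qinner xs xd / qnorm xs| ≤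
      qnorm yd + 2 * qnorm xd * qnorm ys / qnorm (xs + ys) := by
  have e := aux_bound ((WithLp.equiv 2 (Fin n → ℍ)).symm xs)
    ((WithLp.equiv 2 (Fin n → ℍ)).symm xd)
    ((WithLp.equiv 2 (Fin n → ℍ)).symm ys)
    ((WithLp.equiv 2 (Fin n → ℍ)).symm yd)
    (by simpa using hx) (by
      intro h
      apply hxy
      have := congrArg (WithLp.equiv 2 (Fin n → ℍ)) h
      simpa using this)
  simpa [qnorm_eq, qinner_eq] using e
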